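/- (Algebraic form of Bonan's theorem.) Let R : (Fin 7)⁴ → ℝ satisfy the symmetries of a Riemann curvature tensor: R_{abcd} = −R_{bacd} = −R_{abdc} = R_{cdab}, and the first Bianchi identity R_{abcd} + R_{acdb} + R_{adbc} = 0. Suppose moreover that R takes values in Sym²(𝔤₂), i.e. for all indices a, b, e: Σ_{c,d} φ₀_{ecd} R_{abcd} = 0 (each 2-form R_{ab··} lies in Λ²₁₄ ≅ 𝔤₂). Then the Ricci contraction vanishes: Σ_a R_{abad} = 0 for all b, d. -/
import Mathlib


open scoped BigOperators

noncomputable section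

/-- Kronecker delta `δ` on `Fin 7`. -/
def kd (a b : Fin 7) : ℝ := if a = b then 1 else 0

/-- The elementary alternating 3-tensor supported on permutations of `(i, j, k)`. -/
def trip (i j k a b c : Fin 7) : ℝ :=
  (if a = i ∧ b = j ∧ c = k then (1 : ℝ) else 0)
    + (if a = j ∧ b = k ∧ c = i then (1 : ℝ) else 0)
    + (if a = k ∧ b = i ∧ c = j then (1 : ℝ) else 0)
    - (if a = i ∧ b = k ∧ c = j then (1 : ℝ) else 0)
    - (if a = k ∧ b = j ∧ c = i then (1 : ℝ) else 0)
    - (if a = j ∧ b = i ∧ c = k then (1 : ℝ) else 0)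

/-- The standard `G₂` 3-form `φ₀` on `ℝ⁷`.  Indices `0, …, 6` correspond to the
paper's `1, …, 7`, so this is
`e^{123} + e^{145} + e^{167} + e^{246} - e^{257} - e^{347} - e^{356}`. -/
def phi0 (a b c : Fin 7) : ℝ :=
  trip 0 1 2 a b c + trip 0 3 4 a b c + trip 0 5 6 a b c + trip 1 3 5 a b c
    - trip 1 4 6 a b c - trip 2 3 6 a b c - trip 2 4 5 a b c

/-- The totally antisymmetric Levi-Civita symbol `ε̂` on seven indices,
with `ε̂_{1234567} = 1`. -/
def eps7 (a b c d e f g : Fin 7) : ℝ :=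
  if h : Function.Bijective ![a, b, c, d, e, f, g] then
    ((Equiv.Perm.sign (Equiv.ofBijective _ h) : ℤ) : ℝ)
  else 0

/-- The 4-form `ψ₀ = ⋆φ₀`, the Euclidean Hodge dual of `φ₀`:
`ψ₀ = e^{4567} + e^{2367} + e^{2345} + e^{1357} - e^{1346} - e^{1256} - e^{1247}`. -/
def psi0 (m n p q : Fin 7) : ℝ :=
  (1 / 6 : ℝ) * ∑ r, ∑ s, ∑ t, eps7 m n p q r s t * phi0 r s t

/- ### Auxiliary integer-valued versions (for decidable computation) -/

def trip' (i j k a b c : Fin 7) : ℤ :=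
  (if a = i ∧ b = j ∧ c = k then (1 : ℤ) else 0)
    + (if a = j ∧ b = k ∧ c = i then (1 : ℤ) else 0)
    + (if a = k ∧ b = i ∧ c = j then (1 : ℤ) else 0)
    - (if a = i ∧ b = k ∧ c = j then (1 : ℤ) else 0)
    - (if a = k ∧ b = j ∧ c = i then (1 : ℤ) else 0)
    - (if a = j ∧ b = i ∧ c = k then (1 : ℤ) else 0)

def phi0' (a b c : Fin 7) : ℤ :=
  trip' 0 1 2 a b c + trip' 0 3 4 a b c + trip' 0 5 6 a b c + trip' 1 3 5 a b c
    - trip' 1 4 6 a b c - trip' 2 3 6 a b c - trip' 2 4 5 a b c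

def kd' (a b : Fin 7) : ℤ := if a = b then 1 else 0

def psi' (a g c d : Fin 7) : ℤ :=
  (phi0' 0 a g * phi0' 0 c d + phi0' 1 a g * phi0' 1 c d + phi0' 2 a g * phi0' 2 c d
    + phi0' 3 a g * phi0' 3 c d + phi0' 4 a g * phi0' 4 c d + phi0' 5 a g * phi0' 5 c d
    + phi0' 6 a g * phi0' 6 c d) - kd' a c * kd' g d + kd' a d * kd' g c

lemma trip_cast (i j k a b c : Fin 7) : trip i j k a b c = ((trip' i j k a b c : ℤ) : ℝ) := by
  simp [trip, trip', apply_ite (Int.cast : ℤ → ℝ)]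

lemma phi0_cast (a b c : Fin 7) : phi0 a b c = ((phi0' a b c : ℤ) : ℝ) := by
  simp [phi0, phi0', trip_cast]

lemma kd_cast (a b : Fin 7) : kd a b = ((kd' a b : ℤ) : ℝ) := by
  simp [kd, kd', apply_ite (Int.cast : ℤ → ℝ)]

set_option maxHeartbeats 4000000 in
lemma phi0'_swap : ∀ e c d : Fin 7, phi0' e c d = - phi0' e d c := by decide

set_option maxHeartbeats 16000000 in
lemma psi'_cyc : ∀ a g c d : Fin 7, psi' a g c d = psi' c g d a := by decide

lemma phi0_swap (e c d : Fin 7) : phi0 e c d = - phi0 e d c := by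
  rw [phi0_cast, phi0_cast, phi0'_swap e c d]; push_cast; ring

/-- The `ψ`-part of the `φφ` contraction, as a real tensor. -/
def psiR (a g c d : Fin 7) : ℝ :=
  (∑ e, phi0 e a g * phi0 e c d) - kd a c * kd g d + kd a d * kd g c

lemma psiR_cast (a g c d : Fin 7) : psiR a g c d = ((psi' a g c d : ℤ) : ℝ) := by
  rw [psiR, psi', Fin.sum_univ_seven]
  simp only [phi0_cast, kd_cast]
  push_cast
  ring

lemma psiR_cyc (a g c d : Fin 7) : psiR a g c d = psiR c g d a := by
  rw [psiR_cast, psiR_cast, psi'_cyc a g c d]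

lemma sum_rot (F : Fin 7 → Fin 7 → Fin 7 → ℝ) :
    (∑ a, ∑ c, ∑ d, F a c d) = ∑ a, ∑ c, ∑ d, F d a c := by
  rw [Finset.sum_comm]
  exact Finset.sum_congr rfl fun a _ => Finset.sum_comm

lemma sum_rot2 (F : Fin 7 → Fin 7 → Fin 7 → ℝ) :
    (∑ a, ∑ c, ∑ d, F a c d) = ∑ a, ∑ c, ∑ d, F c d a :=
  (sum_rot F).trans (sum_rot fun x y z => F z x y)

lemma sum4_swap (f : Fin 7 → Fin 7 → Fin 7 → Fin 7 → ℝ) :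
    (∑ e, ∑ a, ∑ c, ∑ d, f e a c d) = ∑ a, ∑ c, ∑ d, ∑ e, f e a c d := by
  rw [Finset.sum_comm]
  exact Finset.sum_congr rfl fun a _ => by
    rw [Finset.sum_comm]
    exact Finset.sum_congr rfl fun c _ => Finset.sum_comm

lemma kd_sum (X : Fin 7 → ℝ) (g : Fin 7) : ∑ d, kd g d * X d = X g := by
  simp [kd, ite_mul]


/-- algebraic form of Bonan's theorem. If `R` has the symmetries of a
Riemann curvature tensor and takes values in `Sym²(𝔤₂)`, i.e. each 2-form `R_{ab··}`
satisfies `Σ_{c,d} φ₀_{ecd} R_{abcd} = 0`, then the Ricci contraction vanishes: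
`Σ_a R_{abad} = 0` for all `b`, `d`. -/
theorem bonan_ricci_flat (R : Fin 7 → Fin 7 → Fin 7 → Fin 7 → ℝ)
    (hanti₁ : ∀ a b c d, R a b c d = -R b a c d)
    (hanti₂ : ∀ a b c d, R a b c d = -R a b d c)
    (hpair : ∀ a b c d, R a b c d = R c d a b)
    (hbianchi : ∀ a b c d, R a b c d + R a c d b + R a d b c = 0)
    (hg2 : ∀ a b e, ∑ c, ∑ d, phi0 e c d * R a b c d = 0) :
    ∀ b d, ∑ a, R a b a d = 0 := by
  intro b g
  -- Step 1: for each a, e the 2-form `R_{a·b·}` is also φ-traceless.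
  have star : ∀ a e, (∑ c, ∑ d, phi0 e c d * R a c b d) = 0 := by
    intro a e
    have h1 : (∑ c, ∑ d, phi0 e c d * R a c b d)
        = (∑ c, ∑ d, phi0 e c d * R a b c d) - ∑ c, ∑ d, phi0 e c d * R a d c b := by
      rw [← Finset.sum_sub_distrib]
      refine Finset.sum_congr rfl fun c _ => ?_
      rw [← Finset.sum_sub_distrib]
      refine Finset.sum_congr rfl fun d _ => ?_
      linear_combination phi0 e c d * hbianchi a c b d - phi0 e c d * hanti₂ a b c d
    have h2 : (∑ c, ∑ d, phi0 e c d * R a d c b) = ∑ c, ∑ d, phi0 e c d * R a c b d := by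
      rw [Finset.sum_comm]
      refine Finset.sum_congr rfl fun c _ => Finset.sum_congr rfl fun d _ => ?_
      rw [phi0_swap e d c, hanti₂ a c b d]; ring
    have h3 := hg2 a b e
    linarith [h1, h2, h3]
  -- Step 2: contract `star` with φ once more.
  have U0 : (∑ e, ∑ a, ∑ c, ∑ d, phi0 e a g * (phi0 e c d * R a c b d)) = 0 := by
    simp only [← Finset.mul_sum, star, mul_zero, Finset.sum_const_zero]
  have U1 : (∑ a, ∑ c, ∑ d, (∑ e, phi0 e a g * phi0 e c d) * R a c b d) = 0 := by
    calc (∑ a, ∑ c, ∑ d, (∑ e, phi0 e a g * phi0 e c d) * R a c b d)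
        = ∑ a, ∑ c, ∑ d, ∑ e, phi0 e a g * (phi0 e c d * R a c b d) := by
          simp only [Finset.sum_mul, mul_assoc]
      _ = ∑ e, ∑ a, ∑ c, ∑ d, phi0 e a g * (phi0 e c d * R a c b d) := (sum4_swap _).symm
      _ = 0 := U0
  -- Step 3: split the φφ contraction into ψ and δδ parts.
  have U3 : (∑ a, ∑ c, ∑ d, psiR a g c d * R a c b d)
      + (∑ a, ∑ c, ∑ d, (kd a c * kd g d) * R a c b d)
      - (∑ a, ∑ c, ∑ d, (kd a d * kd g c) * R a c b d) = 0 := by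
    calc (∑ a, ∑ c, ∑ d, psiR a g c d * R a c b d)
          + (∑ a, ∑ c, ∑ d, (kd a c * kd g d) * R a c b d)
          - (∑ a, ∑ c, ∑ d, (kd a d * kd g c) * R a c b d)
        = ∑ a, ∑ c, ∑ d, (psiR a g c d * R a c b d + (kd a c * kd g d) * R a c b d
            - (kd a d * kd g c) * R a c b d) := by
          simp only [Finset.sum_add_distrib, Finset.sum_sub_distrib]
      _ = ∑ a, ∑ c, ∑ d, (∑ e, phi0 e a g * phi0 e c d) * R a c b d := by
          refine Finset.sum_congr rfl fun a _ => Finset.sum_congr rfl fun c _ =>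
            Finset.sum_congr rfl fun d _ => ?_
          simp only [psiR]; ring
      _ = 0 := U1
  -- Step 4: evaluate the two δδ contractions.
  have A1 : (∑ a, ∑ c, ∑ d, (kd a c * kd g d) * R a c b d) = 0 := by
    have hz : ∀ a : Fin 7, R a a b g = 0 := fun a => by linarith [hanti₁ a a b g]
    calc (∑ a, ∑ c, ∑ d, (kd a c * kd g d) * R a c b d)
        = ∑ a, ∑ c, kd a c * R a c b g := by
          refine Finset.sum_congr rfl fun a _ => Finset.sum_congr rfl fun c _ => ?_
          calc (∑ d, (kd a c * kd g d) * R a c b d)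
              = ∑ d, kd a c * (kd g d * R a c b d) := by
                refine Finset.sum_congr rfl fun d _ => by ring
            _ = kd a c * ∑ d, kd g d * R a c b d := by rw [Finset.mul_sum]
            _ = kd a c * R a c b g := by rw [kd_sum]
      _ = ∑ a, R a a b g := Finset.sum_congr rfl fun a _ => kd_sum (fun c => R a c b g) a
      _ = 0 := Finset.sum_eq_zero fun a _ => hz a
  have A2 : (∑ a, ∑ c, ∑ d, (kd a d * kd g c) * R a c b d) = - ∑ a, R a b a g := by
    calc (∑ a, ∑ c, ∑ d, (kd a d * kd g c) * R a c b d)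
        = ∑ a, ∑ c, kd g c * R a c b a := by
          refine Finset.sum_congr rfl fun a _ => Finset.sum_congr rfl fun c _ => ?_
          calc (∑ d, (kd a d * kd g c) * R a c b d)
              = ∑ d, kd a d * (kd g c * R a c b d) := by
                refine Finset.sum_congr rfl fun d _ => by ring
            _ = kd g c * R a c b a := by rw [kd_sum (fun d => kd g c * R a c b d) a]
      _ = ∑ a, R a g b a := Finset.sum_congr rfl fun a _ => kd_sum (fun c => R a c b a) g
      _ = - ∑ a, R a b a g := by
          rw [← Finset.sum_neg_distrib]
          refine Finset.sum_congr rfl fun a _ => ?_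
          linear_combination hpair a g b a + hanti₁ b a a g
  -- Step 5: the ψ-contraction vanishes by the Bianchi identity.
  have V0 : (∑ a, ∑ c, ∑ d, psiR a g c d * R a c b d) = 0 := by
    set V := ∑ a, ∑ c, ∑ d, psiR a g c d * R a c b d with hVdef
    have hV : V = (- ∑ a, ∑ c, ∑ d, psiR a g c d * R b a c d)
        - ∑ a, ∑ c, ∑ d, psiR a g c d * R b c d a := by
      rw [hVdef, ← Finset.sum_neg_distrib, ← Finset.sum_sub_distrib]
      refine Finset.sum_congr rfl fun a _ => ?_
      rw [← Finset.sum_neg_distrib, ← Finset.sum_sub_distrib]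
      refine Finset.sum_congr rfl fun c _ => ?_
      rw [← Finset.sum_neg_distrib, ← Finset.sum_sub_distrib]
      refine Finset.sum_congr rfl fun d _ => ?_
      linear_combination psiR a g c d * hpair a c b d + psiR a g c d * hbianchi b d a c
    have hV1 : (∑ a, ∑ c, ∑ d, psiR a g c d * R b a c d) = V := by
      calc (∑ a, ∑ c, ∑ d, psiR a g c d * R b a c d)
          = ∑ a, ∑ c, ∑ d, psiR a g c d * R c d b a := by
            refine Finset.sum_congr rfl fun a _ => Finset.sum_congr rfl fun c _ =>
              Finset.sum_congr rfl fun d _ => ?_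
            rw [hpair b a c d]
        _ = ∑ a, ∑ c, ∑ d, psiR d g a c * R a c b d :=
            sum_rot (fun a c d => psiR a g c d * R c d b a)
        _ = V := by
            refine Finset.sum_congr rfl fun a _ => Finset.sum_congr rfl fun c _ =>
              Finset.sum_congr rfl fun d _ => ?_
            rw [psiR_cyc d g a c]
    have hV2 : (∑ a, ∑ c, ∑ d, psiR a g c d * R b c d a) = V := by
      calc (∑ a, ∑ c, ∑ d, psiR a g c d * R b c d a)
          = ∑ a, ∑ c, ∑ d, psiR a g c d * R d a b c := by
            refine Finset.sum_congr rfl fun a _ => Finset.sum_congr rfl fun c _ =>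
              Finset.sum_congr rfl fun d _ => ?_
            rw [hpair b c d a]
        _ = ∑ a, ∑ c, ∑ d, psiR c g d a * R a c b d :=
            sum_rot2 (fun a c d => psiR a g c d * R d a b c)
        _ = V := by
            refine Finset.sum_congr rfl fun a _ => Finset.sum_congr rfl fun c _ =>
              Finset.sum_congr rfl fun d _ => ?_
            rw [← psiR_cyc a g c d]
    linarith [hV, hV1, hV2]
  linarith [U3, A1, A2, V0]
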